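/- (Dualization of the dissipation inequality) Let P ∈ S^n with P > 0, S ∈ S^{m+p} nonsingular with inertia (p,0,m) (p negative and m positive eigenvalues), and A ∈ ℝ^{n×n}, B ∈ ℝ^{n×m}, C ∈ ℝ^{p×n}, D ∈ ℝ^{p×m}. Define Ŝ := [[0, -I_p],[I_m, 0]] S^{-1} [[0, -I_m],[I_p, 0]]. Then [I,0;A,B]ᵀ diag(P,-P) [I,0;A,B] + [0,I;C,D]ᵀ S [0,I;C,D] ≥ 0 holds if and only if [I,0;Aᵀ,Cᵀ]ᵀ diag(P^{-1},-P^{-1}) [I,0;Aᵀ,Cᵀ] + [0,I;Bᵀ,Dᵀ]ᵀ Ŝ [0,I;Bᵀ,Dᵀ] ≥ 0. -/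

import Mathlib

open Matrix Module Submodule

set_option linter.unusedSectionVars false
set_option maxHeartbeats 1000000

section auxLemmas

lemma dd_maxdim {N : Type*} [Fintype N] (Θ : Matrix N N ℝ)
    (PS NS : Submodule ℝ (N → ℝ))
    (hPS : ∀ v ∈ PS, 0 ≤ v ⬝ᵥ (Θ *ᵥ v))
    (hNS : ∀ v ∈ NS, v ≠ 0 → v ⬝ᵥ (Θ *ᵥ v) < 0) :
    finrank ℝ PS + finrank ℝ NS ≤ Fintype.card N := by
  have hdisj : PS ⊓ NS = ⊥ := by
    rw [Submodule.eq_bot_iff]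
    rintro v ⟨hv1, hv2⟩
    by_contra hvne
    exact absurd (hPS v hv1) (not_le.2 (hNS v hv2 hvne))
  have h1 := Submodule.finrank_sup_add_finrank_inf_eq PS NS
  rw [hdisj, finrank_bot, add_zero] at h1
  rw [← h1]
  calc finrank ℝ ↥(PS ⊔ NS) ≤ finrank ℝ (N → ℝ) := Submodule.finrank_le _
    _ = Fintype.card N := Module.finrank_fintype_fun_eq_card ℝ

lemma dd_keystep {N : Type*} [Fintype N] [DecidableEq N] (Θ : Matrix N N ℝ) (hΘ : Θᵀ = Θ)
    (hdet : IsUnit Θ.det)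
    (PS NS : Submodule ℝ (N → ℝ))
    (hPS : ∀ v ∈ PS, 0 ≤ v ⬝ᵥ (Θ *ᵥ v))
    (hNS : ∀ v ∈ NS, v ≠ 0 → v ⬝ᵥ (Θ *ᵥ v) < 0)
    (hdim : Fintype.card N ≤ finrank ℝ PS + finrank ℝ NS)
    (y : N → ℝ) (hy : ∀ u ∈ PS, y ⬝ᵥ u = 0) :
    y ⬝ᵥ (Θ⁻¹ *ᵥ y) ≤ 0 := by
  by_contra hpos
  push_neg at hpos
  set z := Θ⁻¹ *ᵥ y with hz
  have hΘz : Θ *ᵥ z = y := by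
    rw [hz, Matrix.mulVec_mulVec, Matrix.mul_nonsing_inv _ hdet, Matrix.one_mulVec]
  have hyz : 0 < y ⬝ᵥ z := hpos
  have hzne : z ≠ 0 := by rintro h; rw [h] at hyz; simp at hyz
  have hzPS : z ∉ PS := fun hmem => by have := hy z hmem; linarith
  have hPS' : ∀ v ∈ PS ⊔ Submodule.span ℝ {z}, 0 ≤ v ⬝ᵥ (Θ *ᵥ v) := by
    intro v hv
    obtain ⟨u, hu, w, hw, rfl⟩ := Submodule.mem_sup.mp hv
    obtain ⟨c, rfl⟩ := Submodule.mem_span_singleton.mp hw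
    have huz : u ⬝ᵥ (Θ *ᵥ z) = 0 := by
      rw [hΘz, dotProduct_comm]; exact hy u hu
    have hzu : z ⬝ᵥ (Θ *ᵥ u) = 0 := by
      rw [Matrix.dotProduct_mulVec, ← Matrix.mulVec_transpose, hΘ, hΘz]
      exact hy u hu
    have hzz : z ⬝ᵥ (Θ *ᵥ z) = y ⬝ᵥ z := by rw [hΘz, dotProduct_comm]
    have h1 := hPS u hu
    have expand : (u + c • z) ⬝ᵥ (Θ *ᵥ (u + c • z))
        = u ⬝ᵥ (Θ *ᵥ u) + c * (u ⬝ᵥ (Θ *ᵥ z)) + c * (z ⬝ᵥ (Θ *ᵥ u))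
          + c * (c * (z ⬝ᵥ (Θ *ᵥ z))) := by
      simp [Matrix.mulVec_add, Matrix.mulVec_smul, dotProduct_add, add_dotProduct,
        smul_dotProduct, dotProduct_smul, smul_eq_mul]
      ring
    rw [expand, huz, hzu, hzz]
    nlinarith [sq_nonneg c, hyz]
  have hinf : PS ⊓ Submodule.span ℝ {z} = ⊥ := by
    rw [Submodule.eq_bot_iff]
    rintro v ⟨hv1, hv2⟩
    obtain ⟨c, rfl⟩ := Submodule.mem_span_singleton.mp hv2
    rcases eq_or_ne c 0 with rfl | hc
    · simp
    · exact absurd (by simpa [hc] using PS.smul_mem c⁻¹ hv1 : z ∈ PS) hzPS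
  have hrank : finrank ℝ ↥(PS ⊔ Submodule.span ℝ {z}) = finrank ℝ PS + 1 := by
    have h1 := Submodule.finrank_sup_add_finrank_inf_eq PS (Submodule.span ℝ {z})
    rw [hinf, finrank_bot, add_zero, finrank_span_singleton hzne] at h1
    exact h1
  have := dd_maxdim Θ (PS ⊔ Submodule.span ℝ {z}) NS hPS' hNS
  rw [hrank] at this
  omega

variable {ι κ : Type*} [Fintype ι] [Fintype κ] [DecidableEq ι] [DecidableEq κ]

lemma dd_BtB_eq_one (b : κ → ι → ℝ) (horth : ∀ k l, b k ⬝ᵥ b l = if k = l then 1 else 0) :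
    (Matrix.of fun i k => b k i)ᵀ * (Matrix.of fun i k => b k i) = 1 := by
  ext k l
  simpa [Matrix.mul_apply, dotProduct, Matrix.one_apply] using horth k l

lemma dd_Bm_inj (b : κ → ι → ℝ) (horth : ∀ k l, b k ⬝ᵥ b l = if k = l then 1 else 0) :
    Function.Injective (Matrix.of fun i k => b k i).mulVecLin := by
  set Bm := (Matrix.of fun i k => b k i : Matrix ι κ ℝ) with hBm
  intro x y hxy
  have h1 : Bmᵀ *ᵥ (Bm *ᵥ x) = Bmᵀ *ᵥ (Bm *ᵥ y) := by
    simp only [Matrix.mulVecLin_apply] at hxy; rw [hxy]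
  rwa [Matrix.mulVec_mulVec, Matrix.mulVec_mulVec, dd_BtB_eq_one b horth,
    Matrix.one_mulVec, Matrix.one_mulVec] at h1

lemma dd_TB_eq (T : Matrix ι ι ℝ) (b : κ → ι → ℝ) (μ : κ → ℝ)
    (heig : ∀ k, T *ᵥ b k = μ k • b k) :
    T * (Matrix.of fun i k => b k i) = (Matrix.of fun i k => b k i) * Matrix.diagonal μ := by
  ext i k
  have := congrFun (heig k) i
  simp only [Matrix.mulVec, dotProduct, Pi.smul_apply, smul_eq_mul] at this
  simp [Matrix.mul_apply, Matrix.diagonal, Matrix.mulVec, dotProduct, this, mul_comm]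

lemma dd_quad_eig (T : Matrix ι ι ℝ) (b : κ → ι → ℝ) (μ : κ → ℝ)
    (horth : ∀ k l, b k ⬝ᵥ b l = if k = l then 1 else 0)
    (heig : ∀ k, T *ᵥ b k = μ k • b k) (x : κ → ℝ) :
    ((Matrix.of fun i k => b k i) *ᵥ x) ⬝ᵥ (T *ᵥ ((Matrix.of fun i k => b k i) *ᵥ x))
      = ∑ k, μ k * x k ^ 2 := by
  set Bm := (Matrix.of fun i k => b k i : Matrix ι κ ℝ) with hBm
  have h1 : T *ᵥ (Bm *ᵥ x) = Bm *ᵥ (Matrix.diagonal μ *ᵥ x) := by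
    rw [Matrix.mulVec_mulVec, Matrix.mulVec_mulVec, dd_TB_eq T b μ heig]
  rw [h1, Matrix.dotProduct_mulVec, ← Matrix.mulVec_transpose, Matrix.mulVec_mulVec,
    dd_BtB_eq_one b horth, Matrix.one_mulVec]
  simp only [dotProduct, Matrix.mulVec_diagonal]
  exact Finset.sum_congr rfl fun k _ => by ring

variable {α β γ : Type*} [Fintype α] [Fintype β] [Fintype γ]

lemma dd_quad_blocks (Θ₁ : Matrix α α ℝ) (T : Matrix β β ℝ) (X : Matrix α γ ℝ) (Y : Matrix β γ ℝ)
    (x : γ → ℝ) :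
    x ⬝ᵥ ((Xᵀ * Θ₁ * X + Yᵀ * T * Y) *ᵥ x)
      = (X *ᵥ x) ⬝ᵥ (Θ₁ *ᵥ (X *ᵥ x)) + (Y *ᵥ x) ⬝ᵥ (T *ᵥ (Y *ᵥ x)) := by
  rw [Matrix.add_mulVec, dotProduct_add]
  congr 1
  · rw [← Matrix.mulVec_mulVec, ← Matrix.mulVec_mulVec, Matrix.dotProduct_mulVec,
      Matrix.vecMul_transpose]
  · rw [← Matrix.mulVec_mulVec, ← Matrix.mulVec_mulVec, Matrix.dotProduct_mulVec,
      Matrix.vecMul_transpose]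

lemma dd_quad_fromRows (Θ₁ : Matrix α α ℝ) (T : Matrix β β ℝ) (X : Matrix α γ ℝ)
    (Y : Matrix β γ ℝ) (x : γ → ℝ) :
    (Matrix.fromRows X Y *ᵥ x) ⬝ᵥ (Matrix.fromBlocks Θ₁ 0 0 T *ᵥ (Matrix.fromRows X Y *ᵥ x))
      = (X *ᵥ x) ⬝ᵥ (Θ₁ *ᵥ (X *ᵥ x)) + (Y *ᵥ x) ⬝ᵥ (T *ᵥ (Y *ᵥ x)) := by
  rw [Matrix.fromRows_mulVec, Matrix.fromBlocks_mulVec]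
  simp only [Sum.elim_comp_inl, Sum.elim_comp_inr, Matrix.zero_mulVec, add_zero, zero_add]
  rw [sumElim_dotProduct_sumElim]

lemma dd_quad_sum_elim (M : Matrix α α ℝ) (Nn : Matrix β β ℝ) (a : α → ℝ) (b : β → ℝ) :
    (Sum.elim a b) ⬝ᵥ (Matrix.fromBlocks M 0 0 Nn *ᵥ Sum.elim a b)
      = a ⬝ᵥ (M *ᵥ a) + b ⬝ᵥ (Nn *ᵥ b) := by
  rw [Matrix.fromBlocks_mulVec]
  simp only [Sum.elim_comp_inl, Sum.elim_comp_inr, Matrix.zero_mulVec, add_zero, zero_add]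
  rw [sumElim_dotProduct_sumElim]

lemma dd_herm (M : Matrix α α ℝ) (hM : Mᵀ = M) (X : Matrix α γ ℝ) :
    (Xᵀ * M * X).IsHermitian := by
  have h : (Xᵀ * M * X)ᵀ = Xᵀ * M * X := by
    rw [Matrix.transpose_mul, Matrix.transpose_mul, Matrix.transpose_transpose, hM,
      Matrix.mul_assoc]
  simpa [Matrix.IsHermitian, Matrix.conjTranspose_eq_transpose_of_trivial] using h

lemma dd_inj_of_left_inv {N γ : Type*} [Fintype N] [Fintype γ] [DecidableEq γ] (Uu : Matrix N γ ℝ)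
    (L : Matrix γ N ℝ) (h : L * Uu = 1) : Function.Injective Uu.mulVecLin := by
  intro x y hxy
  simp only [Matrix.mulVecLin_apply] at hxy
  have := congrArg (fun v => L *ᵥ v) hxy
  simpa [Matrix.mulVec_mulVec, h, Matrix.one_mulVec] using this

/-- The abstract core: if the quadratic form of `Θ` is nonneg on the range of `Uu`,
`NS` is a strictly negative subspace of complementary dimension, and `Ww` is
`⬝ᵥ`-orthogonal to `Uu`, then the form of `Θ⁻¹` is nonpositive on the range of `Ww`. -/
lemma dd_core {N γ δ : Type*} [Fintype N] [DecidableEq N] [Fintype γ] [Fintype δ]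
    (Θ : Matrix N N ℝ) (hΘ : Θᵀ = Θ) (hdet : IsUnit Θ.det)
    (Uu : Matrix N γ ℝ) (Ww : Matrix N δ ℝ)
    (hUinj : Function.Injective Uu.mulVecLin)
    (NS : Submodule ℝ (N → ℝ))
    (hNS : ∀ v ∈ NS, v ≠ 0 → v ⬝ᵥ (Θ *ᵥ v) < 0)
    (hdim : Fintype.card N ≤ Fintype.card γ + finrank ℝ NS)
    (horth : ∀ (x : γ → ℝ) (c : δ → ℝ), (Ww *ᵥ c) ⬝ᵥ (Uu *ᵥ x) = 0)
    (hq : ∀ x, 0 ≤ (Uu *ᵥ x) ⬝ᵥ (Θ *ᵥ (Uu *ᵥ x))) (c : δ → ℝ) :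
    (Ww *ᵥ c) ⬝ᵥ (Θ⁻¹ *ᵥ (Ww *ᵥ c)) ≤ 0 := by
  have hrange : finrank ℝ (LinearMap.range Uu.mulVecLin) = Fintype.card γ := by
    rw [LinearMap.finrank_range_of_inj hUinj, Module.finrank_fintype_fun_eq_card]
  apply dd_keystep Θ hΘ hdet (LinearMap.range Uu.mulVecLin) NS ?_ hNS ?_ _ ?_
  · rintro v ⟨x, rfl⟩
    exact hq x
  · rw [hrange]; exact hdim
  · rintro u ⟨x, rfl⟩
    exact horth x c

end auxLemmas

open scoped Matrix

theorem dualization_of_dissipation_inequality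
    (n m p : ℕ)
    (P : Matrix (Fin n) (Fin n) ℝ) (hP : P.PosDef)
    (S : Matrix (Fin m ⊕ Fin p) (Fin m ⊕ Fin p) ℝ) (hS : S.IsHermitian)
    (hinertia_neg : {i : Fin m ⊕ Fin p | hS.eigenvalues i < 0}.ncard = p)
    (hinertia_pos : {i : Fin m ⊕ Fin p | 0 < hS.eigenvalues i}.ncard = m)
    (A : Matrix (Fin n) (Fin n) ℝ) (B : Matrix (Fin n) (Fin m) ℝ)
    (C : Matrix (Fin p) (Fin n) ℝ) (D : Matrix (Fin p) (Fin m) ℝ) :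
    ((Matrix.fromBlocks (1 : Matrix (Fin n) (Fin n) ℝ) (0 : Matrix (Fin n) (Fin m) ℝ) A B)ᵀ *
        Matrix.fromBlocks P 0 0 (-P) *
        Matrix.fromBlocks (1 : Matrix (Fin n) (Fin n) ℝ) (0 : Matrix (Fin n) (Fin m) ℝ) A B
      + (Matrix.fromBlocks (0 : Matrix (Fin m) (Fin n) ℝ) (1 : Matrix (Fin m) (Fin m) ℝ) C D)ᵀ *
        S *
        Matrix.fromBlocks (0 : Matrix (Fin m) (Fin n) ℝ) (1 : Matrix (Fin m) (Fin m) ℝ) C D).PosSemidef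
    ↔ ((Matrix.fromBlocks (1 : Matrix (Fin n) (Fin n) ℝ) (0 : Matrix (Fin n) (Fin p) ℝ) Aᵀ Cᵀ)ᵀ *
        Matrix.fromBlocks P⁻¹ 0 0 (-P⁻¹) *
        Matrix.fromBlocks (1 : Matrix (Fin n) (Fin n) ℝ) (0 : Matrix (Fin n) (Fin p) ℝ) Aᵀ Cᵀ
      + (Matrix.fromBlocks (0 : Matrix (Fin p) (Fin n) ℝ) (1 : Matrix (Fin p) (Fin p) ℝ) Bᵀ Dᵀ)ᵀ *
        (Matrix.fromBlocks (0 : Matrix (Fin p) (Fin m) ℝ) (-(1 : Matrix (Fin p) (Fin p) ℝ))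
            (1 : Matrix (Fin m) (Fin m) ℝ) (0 : Matrix (Fin m) (Fin p) ℝ) *
          S⁻¹ *
          Matrix.fromBlocks (0 : Matrix (Fin m) (Fin p) ℝ) (-(1 : Matrix (Fin m) (Fin m) ℝ))
            (1 : Matrix (Fin p) (Fin p) ℝ) (0 : Matrix (Fin p) (Fin m) ℝ)) *
        Matrix.fromBlocks (0 : Matrix (Fin p) (Fin n) ℝ) (1 : Matrix (Fin p) (Fin p) ℝ) Bᵀ Dᵀ).PosSemidef := by
  classical
  -- eigen data of S
  set μ : Fin m ⊕ Fin p → ℝ := hS.eigenvalues with hμdef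
  set bb : Fin m ⊕ Fin p → (Fin m ⊕ Fin p) → ℝ := fun i => ⇑(hS.eigenvectorBasis i) with hbb
  have horth : ∀ i j, bb i ⬝ᵥ bb j = if i = j then (1:ℝ) else 0 := by
    intro i j
    have h := orthonormal_iff_ite.mp hS.eigenvectorBasis.orthonormal i j
    simpa [hbb, PiLp.inner_apply, dotProduct, RCLike.inner_apply, starRingEnd_apply, mul_comm] using h
  have heig : ∀ i, S *ᵥ bb i = μ i • bb i := fun i => hS.mulVec_eigenvectorBasis i
  -- all eigenvalues are nonzero
  have hdisj : Disjoint {i | μ i < 0} {i | 0 < μ i} := by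
    rw [Set.disjoint_left]; intro i h1 h2
    simp only [Set.mem_setOf_eq] at h1 h2
    linarith
  have hfin1 : ({i | μ i < 0} : Set (Fin m ⊕ Fin p)).Finite := Set.toFinite _
  have hfin2 : ({i | 0 < μ i} : Set (Fin m ⊕ Fin p)).Finite := Set.toFinite _
  have hunion : {i | μ i < 0} ∪ {i | 0 < μ i} = (Set.univ : Set (Fin m ⊕ Fin p)) := by
    apply Set.eq_of_subset_of_ncard_le (Set.subset_univ _)
    rw [Set.ncard_union_eq hdisj hfin1 hfin2, hinertia_neg, hinertia_pos, Set.ncard_univ]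
    simp only [Nat.card_eq_fintype_card, Fintype.card_sum, Fintype.card_fin]
    omega
  have hμne : ∀ i, μ i ≠ 0 := by
    intro i hzero
    have : i ∈ {i | μ i < 0} ∪ {i | 0 < μ i} := hunion ▸ Set.mem_univ i
    rcases this with h | h <;> simp only [Set.mem_setOf_eq] at h <;> linarith
  have hSdetval : S.det = ∏ i, μ i := by simpa using hS.det_eq_prod_eigenvalues
  have hSdet : IsUnit S.det := by
    rw [hSdetval]
    exact (Finset.prod_ne_zero_iff.mpr fun i _ => hμne i).isUnit
  have hPdet : IsUnit P.det := hP.det_pos.ne'.isUnit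
  have hPinv : P⁻¹.PosDef := hP.inv
  have hPt : Pᵀ = P := by
    rw [← Matrix.conjTranspose_eq_transpose_of_trivial]; exact hP.1
  have hSt : Sᵀ = S := by
    rw [← Matrix.conjTranspose_eq_transpose_of_trivial]; exact hS
  have hSit : S⁻¹ᵀ = S⁻¹ := by rw [Matrix.transpose_nonsing_inv, hSt]
  have hPit : P⁻¹ᵀ = P⁻¹ := by rw [Matrix.transpose_nonsing_inv, hPt]
  have heiginv : ∀ i, S⁻¹ *ᵥ bb i = (μ i)⁻¹ • bb i := by
    intro i
    have h1 : S⁻¹ *ᵥ (S *ᵥ bb i) = bb i := by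
      rw [Matrix.mulVec_mulVec, Matrix.nonsing_inv_mul _ hSdet, Matrix.one_mulVec]
    rw [heig i, Matrix.mulVec_smul] at h1
    have h2 := congrArg (fun v => (μ i)⁻¹ • v) h1
    simpa [smul_smul, inv_mul_cancel₀ (hμne i)] using h2
  -- index equivalences with `Fin p` and `Fin m`
  have hcn : Fintype.card ↥{i | μ i < 0} = p := by
    rw [← Nat.card_eq_fintype_card, Nat.card_coe_set_eq, hinertia_neg]
  have hcp : Fintype.card ↥{i | 0 < μ i} = m := by
    rw [← Nat.card_eq_fintype_card, Nat.card_coe_set_eq, hinertia_pos]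
  set negE := (Fintype.equivFinOfCardEq hcn).symm with hnegE
  set posE := (Fintype.equivFinOfCardEq hcp).symm with hposE
  set bneg : Fin p → (Fin m ⊕ Fin p) → ℝ := fun k => bb (negE k) with hbnegdef
  set bpos : Fin m → (Fin m ⊕ Fin p) → ℝ := fun k => bb (posE k) with hbposdef
  have horthneg : ∀ k l, bneg k ⬝ᵥ bneg l = if k = l then (1:ℝ) else 0 := by
    intro k l
    have hiff : ((negE k : Fin m ⊕ Fin p)) = (negE l : Fin m ⊕ Fin p) ↔ k = l := by
      rw [Subtype.coe_inj, Equiv.apply_eq_iff_eq]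
    simp only [hbnegdef]
    rw [horth]
    exact if_congr hiff rfl rfl
  have horthpos : ∀ k l, bpos k ⬝ᵥ bpos l = if k = l then (1:ℝ) else 0 := by
    intro k l
    have hiff : ((posE k : Fin m ⊕ Fin p)) = (posE l : Fin m ⊕ Fin p) ↔ k = l := by
      rw [Subtype.coe_inj, Equiv.apply_eq_iff_eq]
    simp only [hbposdef]
    rw [horth]
    exact if_congr hiff rfl rfl
  have hμneg : ∀ k, μ ((negE k : Fin m ⊕ Fin p)) < 0 := fun k => (negE k).2
  have hμpos : ∀ k, 0 < μ ((posE k : Fin m ⊕ Fin p)) := fun k => (posE k).2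
  have heigneg : ∀ k, S *ᵥ bneg k = μ ((negE k : Fin m ⊕ Fin p)) • bneg k := fun k => heig _
  have heiginvpos : ∀ k, S⁻¹ *ᵥ bpos k = (μ ((posE k : Fin m ⊕ Fin p)))⁻¹ • bpos k :=
    fun k => heiginv _
  -- block matrices
  set U₁ := Matrix.fromBlocks (1 : Matrix (Fin n) (Fin n) ℝ) (0 : Matrix (Fin n) (Fin m) ℝ) A B
    with hU₁
  set U₂ := Matrix.fromBlocks (0 : Matrix (Fin m) (Fin n) ℝ) (1 : Matrix (Fin m) (Fin m) ℝ) C D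
    with hU₂
  set V₁ := Matrix.fromBlocks (1 : Matrix (Fin n) (Fin n) ℝ) (0 : Matrix (Fin n) (Fin p) ℝ) Aᵀ Cᵀ
    with hV₁
  set V₂ := Matrix.fromBlocks (0 : Matrix (Fin p) (Fin n) ℝ) (1 : Matrix (Fin p) (Fin p) ℝ) Bᵀ Dᵀ
    with hV₂
  set J₁ := Matrix.fromBlocks (0 : Matrix (Fin p) (Fin m) ℝ) (-(1 : Matrix (Fin p) (Fin p) ℝ))
    (1 : Matrix (Fin m) (Fin m) ℝ) (0 : Matrix (Fin m) (Fin p) ℝ) with hJ₁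
  set J₂ := Matrix.fromBlocks (0 : Matrix (Fin m) (Fin p) ℝ) (-(1 : Matrix (Fin m) (Fin m) ℝ))
    (1 : Matrix (Fin p) (Fin p) ℝ) (0 : Matrix (Fin p) (Fin m) ℝ) with hJ₂
  set Θ₁ := Matrix.fromBlocks P 0 0 (-P) with hΘ₁
  set Θ₁i := Matrix.fromBlocks P⁻¹ 0 0 (-P⁻¹) with hΘ₁i
  set W₁ := Matrix.fromBlocks (-Aᵀ) (-Cᵀ) (1 : Matrix (Fin n) (Fin n) ℝ)
    (0 : Matrix (Fin n) (Fin p) ℝ) with hW₁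
  set W₂ := Matrix.fromBlocks (-Bᵀ) (-Dᵀ) (0 : Matrix (Fin p) (Fin n) ℝ)
    (1 : Matrix (Fin p) (Fin p) ℝ) with hW₂
  set Uu := Matrix.fromRows U₁ U₂ with hUu
  set Ww := Matrix.fromRows W₁ W₂ with hWw
  set Θ := Matrix.fromBlocks Θ₁ 0 0 S with hΘ
  set Θi := Matrix.fromBlocks Θ₁i 0 0 S⁻¹ with hΘidef
  have hΘ₁sym : Θ₁ᵀ = Θ₁ := by
    rw [hΘ₁, Matrix.fromBlocks_transpose]
    simp [hPt]
  have hΘ₁isym : Θ₁iᵀ = Θ₁i := by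
    rw [hΘ₁i, Matrix.fromBlocks_transpose]
    simp [hPit]
  have hΘsym : Θᵀ = Θ := by
    rw [hΘ, Matrix.fromBlocks_transpose, hΘ₁sym, hSt]
    simp
  have hΘisym : Θiᵀ = Θi := by
    rw [hΘidef, Matrix.fromBlocks_transpose, hΘ₁isym, hSit]
    simp
  have hΘdet : IsUnit Θ.det := by
    rw [hΘ, Matrix.det_fromBlocks_zero₂₁, hΘ₁, Matrix.det_fromBlocks_zero₂₁]
    refine ((hPdet.mul ?_).mul hSdet)
    rw [Matrix.det_neg, Fintype.card_fin]
    exact ((isUnit_one.neg).pow n).mul hPdet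
  have hmulPP : P * P⁻¹ = 1 := Matrix.mul_nonsing_inv _ hPdet
  have hmulSS : S * S⁻¹ = 1 := Matrix.mul_nonsing_inv _ hSdet
  have hΘinv : Θ⁻¹ = Θi := by
    apply Matrix.inv_eq_right_inv
    rw [hΘ, hΘidef, Matrix.fromBlocks_multiply, hΘ₁, hΘ₁i, Matrix.fromBlocks_multiply]
    simp [hmulPP, hmulSS, Matrix.fromBlocks_one]
  have hΘidet : IsUnit Θi.det := by
    rw [← hΘinv]; exact Matrix.isUnit_nonsing_inv_det _ hΘdet
  have hnegΘidet : IsUnit (-Θi).det := by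
    rw [Matrix.det_neg]; exact ((isUnit_one.neg).pow _).mul hΘidet
  have hnegΘisym : (-Θi)ᵀ = -Θi := by rw [Matrix.transpose_neg, hΘisym]
  have hnegΘiinv : (-Θi)⁻¹ = -Θ := by
    apply Matrix.inv_eq_right_inv
    rw [neg_mul_neg, ← hΘinv, Matrix.nonsing_inv_mul _ hΘdet]
  -- injectivity of Uu and Ww
  have hUinj : Function.Injective Uu.mulVecLin := by
    apply dd_inj_of_left_inv Uu
      (Matrix.fromCols (Matrix.fromBlocks 1 0 0 0) (Matrix.fromBlocks 0 0 1 0))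
    have h1 : (Matrix.fromBlocks 1 0 0 0 : Matrix (Fin n ⊕ Fin m) (Fin n ⊕ Fin n) ℝ) * U₁
        + (Matrix.fromBlocks 0 0 1 0 : Matrix (Fin n ⊕ Fin m) (Fin m ⊕ Fin p) ℝ) * U₂
        = Matrix.fromBlocks 1 0 0 1 := by
      rw [hU₁, hU₂]
      simp [Matrix.fromBlocks_multiply, Matrix.fromBlocks_add]
    rw [hUu, Matrix.fromCols_mul_fromRows, h1, Matrix.fromBlocks_one]
  have hWinj : Function.Injective Ww.mulVecLin := by
    apply dd_inj_of_left_inv Ww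
      (Matrix.fromCols (Matrix.fromBlocks 0 1 0 0) (Matrix.fromBlocks 0 0 0 1))
    have h1 : (Matrix.fromBlocks 0 1 0 0 : Matrix (Fin n ⊕ Fin p) (Fin n ⊕ Fin n) ℝ) * W₁
        + (Matrix.fromBlocks 0 0 0 1 : Matrix (Fin n ⊕ Fin p) (Fin m ⊕ Fin p) ℝ) * W₂
        = Matrix.fromBlocks 1 0 0 1 := by
      rw [hW₁, hW₂]
      simp [Matrix.fromBlocks_multiply, Matrix.fromBlocks_add]
    rw [hWw, Matrix.fromCols_mul_fromRows, h1, Matrix.fromBlocks_one]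
  -- orthogonality of the ranges
  have hWtU : Wwᵀ * Uu = 0 := by
    rw [hWw, hUu, Matrix.transpose_fromRows, Matrix.fromCols_mul_fromRows]
    rw [hW₁, hW₂, hU₁, hU₂]
    simp [Matrix.fromBlocks_transpose, Matrix.fromBlocks_multiply, Matrix.fromBlocks_add]
  have hUtW : Uuᵀ * Ww = 0 := by
    have h := congrArg Matrix.transpose hWtU
    simpa [Matrix.transpose_mul, Matrix.transpose_transpose] using h
  have horthWU : ∀ (x : Fin n ⊕ Fin m → ℝ) (c : Fin n ⊕ Fin p → ℝ),
      (Ww *ᵥ c) ⬝ᵥ (Uu *ᵥ x) = 0 := by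
    intro x c
    rw [Matrix.dotProduct_mulVec, ← Matrix.mulVec_transpose, Matrix.mulVec_mulVec, hUtW,
      Matrix.zero_mulVec, zero_dotProduct]
  have horthUW : ∀ (x : Fin n ⊕ Fin p → ℝ) (c : Fin n ⊕ Fin m → ℝ),
      (Uu *ᵥ c) ⬝ᵥ (Ww *ᵥ x) = 0 := by
    intro x c
    rw [dotProduct_comm]; exact horthWU c x
  -- quadratic form identities
  have hFq : ∀ x, x ⬝ᵥ ((U₁ᵀ * Θ₁ * U₁ + U₂ᵀ * S * U₂) *ᵥ x)
      = (Uu *ᵥ x) ⬝ᵥ (Θ *ᵥ (Uu *ᵥ x)) := by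
    intro x
    rw [hΘ, hUu, dd_quad_blocks, dd_quad_fromRows]
  have hJ2V2 : J₂ * V₂ = W₂ := by
    rw [hJ₂, hV₂, hW₂, Matrix.fromBlocks_multiply]
    simp
  have hV2J1 : V₂ᵀ * J₁ = -W₂ᵀ := by
    rw [hJ₁, hV₂, hW₂]
    simp only [Matrix.fromBlocks_transpose, Matrix.fromBlocks_multiply, Matrix.fromBlocks_neg,
      Matrix.transpose_neg, Matrix.transpose_transpose, Matrix.transpose_one,
      Matrix.transpose_zero]
    rw [Matrix.fromBlocks_inj]
    refine ⟨?_, ?_, ?_, ?_⟩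
    all_goals (simp [Matrix.mul_neg, Matrix.neg_mul, neg_neg]; try abel)
  have hterm2 : V₂ᵀ * (J₁ * S⁻¹ * J₂) * V₂ = -(W₂ᵀ * S⁻¹ * W₂) := by
    calc V₂ᵀ * (J₁ * S⁻¹ * J₂) * V₂ = (V₂ᵀ * J₁) * S⁻¹ * (J₂ * V₂) := by
          simp only [Matrix.mul_assoc]
      _ = -(W₂ᵀ * S⁻¹ * W₂) := by rw [hV2J1, hJ2V2, Matrix.neg_mul, Matrix.neg_mul]
  have hterm1 : V₁ᵀ * Θ₁i * V₁ = -(W₁ᵀ * Θ₁i * W₁) := by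
    rw [hV₁, hW₁, hΘ₁i]
    simp only [Matrix.fromBlocks_transpose, Matrix.fromBlocks_multiply, Matrix.fromBlocks_neg,
      Matrix.transpose_neg, Matrix.transpose_transpose, Matrix.transpose_one,
      Matrix.transpose_zero]
    rw [Matrix.fromBlocks_inj]
    refine ⟨?_, ?_, ?_, ?_⟩
    all_goals (simp [Matrix.mul_neg, Matrix.neg_mul, neg_neg]; try abel)
  have hGmat : V₁ᵀ * Θ₁i * V₁ + V₂ᵀ * (J₁ * S⁻¹ * J₂) * V₂
      = -(W₁ᵀ * Θ₁i * W₁ + W₂ᵀ * S⁻¹ * W₂) := by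
    rw [hterm1, hterm2, neg_add]
  have hGq : ∀ x, x ⬝ᵥ ((V₁ᵀ * Θ₁i * V₁ + V₂ᵀ * (J₁ * S⁻¹ * J₂) * V₂) *ᵥ x)
      = -((Ww *ᵥ x) ⬝ᵥ (Θ⁻¹ *ᵥ (Ww *ᵥ x))) := by
    intro x
    rw [hGmat, Matrix.neg_mulVec, dotProduct_neg, dd_quad_blocks, hΘinv, hΘidef, hWw,
      dd_quad_fromRows]
  -- strictly negative subspaces
  set Bneg := (Matrix.of fun i k => bneg k i : Matrix (Fin m ⊕ Fin p) (Fin p) ℝ) with hBneg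
  set Bpos := (Matrix.of fun i k => bpos k i : Matrix (Fin m ⊕ Fin p) (Fin m) ℝ) with hBpos
  set Mneg := Matrix.fromRows
      (Matrix.fromBlocks (0 : Matrix (Fin n) (Fin n) ℝ) (0 : Matrix (Fin n) (Fin p) ℝ)
        (1 : Matrix (Fin n) (Fin n) ℝ) (0 : Matrix (Fin n) (Fin p) ℝ))
      (Matrix.fromCols (0 : Matrix (Fin m ⊕ Fin p) (Fin n) ℝ) Bneg) with hMneg
  set Mpos := Matrix.fromRows
      (Matrix.fromBlocks (1 : Matrix (Fin n) (Fin n) ℝ) (0 : Matrix (Fin n) (Fin m) ℝ)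
        (0 : Matrix (Fin n) (Fin n) ℝ) (0 : Matrix (Fin n) (Fin m) ℝ))
      (Matrix.fromCols (0 : Matrix (Fin m ⊕ Fin p) (Fin n) ℝ) Bpos) with hMpos
  have hM1neg : ∀ c : Fin n ⊕ Fin p → ℝ,
      (Matrix.fromBlocks (0 : Matrix (Fin n) (Fin n) ℝ) (0 : Matrix (Fin n) (Fin p) ℝ)
        (1 : Matrix (Fin n) (Fin n) ℝ) (0 : Matrix (Fin n) (Fin p) ℝ)) *ᵥ c
        = Sum.elim (0 : Fin n → ℝ) (c ∘ Sum.inl) := by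
    intro c
    rw [Matrix.fromBlocks_mulVec]
    simp [Matrix.zero_mulVec, Matrix.one_mulVec]
  have hM1pos : ∀ c : Fin n ⊕ Fin m → ℝ,
      (Matrix.fromBlocks (1 : Matrix (Fin n) (Fin n) ℝ) (0 : Matrix (Fin n) (Fin m) ℝ)
        (0 : Matrix (Fin n) (Fin n) ℝ) (0 : Matrix (Fin n) (Fin m) ℝ)) *ᵥ c
        = Sum.elim (c ∘ Sum.inl) (0 : Fin n → ℝ) := by
    intro c
    rw [Matrix.fromBlocks_mulVec]
    simp [Matrix.zero_mulVec, Matrix.one_mulVec]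
  have hM2neg : ∀ c : Fin n ⊕ Fin p → ℝ,
      (Matrix.fromCols (0 : Matrix (Fin m ⊕ Fin p) (Fin n) ℝ) Bneg) *ᵥ c
        = Bneg *ᵥ (c ∘ Sum.inr) := by
    intro c
    conv_lhs => rw [← Sum.elim_comp_inl_inr c]
    rw [Matrix.fromCols_mulVec_sumElim]
    simp
  have hM2pos : ∀ c : Fin n ⊕ Fin m → ℝ,
      (Matrix.fromCols (0 : Matrix (Fin m ⊕ Fin p) (Fin n) ℝ) Bpos) *ᵥ c
        = Bpos *ᵥ (c ∘ Sum.inr) := by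
    intro c
    conv_lhs => rw [← Sum.elim_comp_inl_inr c]
    rw [Matrix.fromCols_mulVec_sumElim]
    simp
  have hquadneg : ∀ c : Fin n ⊕ Fin p → ℝ, (Mneg *ᵥ c) ⬝ᵥ (Θ *ᵥ (Mneg *ᵥ c))
      = -((c ∘ Sum.inl) ⬝ᵥ (P *ᵥ (c ∘ Sum.inl)))
        + ∑ k, μ ((negE k : Fin m ⊕ Fin p)) * ((c ∘ Sum.inr) k)^2 := by
    intro c
    rw [hMneg, hΘ, dd_quad_fromRows, hM1neg, hM2neg, hΘ₁, dd_quad_sum_elim, hBneg,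
      dd_quad_eig S bneg _ horthneg heigneg]
    simp [Matrix.neg_mulVec, dotProduct_neg]
  have hquadpos : ∀ c : Fin n ⊕ Fin m → ℝ, (Mpos *ᵥ c) ⬝ᵥ ((-Θi) *ᵥ (Mpos *ᵥ c))
      = -((c ∘ Sum.inl) ⬝ᵥ (P⁻¹ *ᵥ (c ∘ Sum.inl))
          + ∑ k, (μ ((posE k : Fin m ⊕ Fin p)))⁻¹ * ((c ∘ Sum.inr) k)^2) := by
    intro c
    rw [Matrix.neg_mulVec, dotProduct_neg, hMpos, hΘidef, dd_quad_fromRows, hM1pos, hM2pos,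
      hΘ₁i, dd_quad_sum_elim, hBpos, dd_quad_eig S⁻¹ bpos _ horthpos heiginvpos]
    simp [Matrix.neg_mulVec, dotProduct_neg]
  have hNSneg : ∀ v ∈ LinearMap.range Mneg.mulVecLin, v ≠ 0 → v ⬝ᵥ (Θ *ᵥ v) < 0 := by
    rintro v ⟨c, rfl⟩ hvne
    rw [Matrix.mulVecLin_apply, hquadneg c]
    have hcne : c ≠ 0 := fun h => hvne (by rw [h]; simp)
    have h2 : ∀ k, μ ((negE k : Fin m ⊕ Fin p)) * ((c ∘ Sum.inr) k)^2 ≤ 0 := fun k => by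
      nlinarith [hμneg k, sq_nonneg ((c ∘ Sum.inr) k)]
    by_cases hc1 : c ∘ Sum.inl = 0
    · have hc2 : ∃ k, (c ∘ Sum.inr) k ≠ 0 := by
        by_contra hno
        push_neg at hno
        exact hcne (funext fun i => by
          cases i with
          | inl i => exact congrFun hc1 i
          | inr k => exact hno k)
      obtain ⟨k0, hk0⟩ := hc2
      have hk0' : μ ((negE k0 : Fin m ⊕ Fin p)) * ((c ∘ Sum.inr) k0)^2 < 0 :=
        mul_neg_of_neg_of_pos (hμneg k0) (by positivity)
      have hsum : ∑ k, μ ((negE k : Fin m ⊕ Fin p)) * ((c ∘ Sum.inr) k)^2 < 0 := by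
        have h := Finset.sum_lt_sum (g := fun _ => (0:ℝ)) (fun k _ => h2 k)
          ⟨k0, Finset.mem_univ _, hk0'⟩
        simpa using h
      have h1 : (c ∘ Sum.inl) ⬝ᵥ (P *ᵥ (c ∘ Sum.inl)) = 0 := by rw [hc1]; simp
      linarith
    · have h1' : 0 < (c ∘ Sum.inl) ⬝ᵥ (P *ᵥ (c ∘ Sum.inl)) := by
        have h := hP.dotProduct_mulVec_pos hc1
        simpa [star_trivial] using h
      have hsum : ∑ k, μ ((negE k : Fin m ⊕ Fin p)) * ((c ∘ Sum.inr) k)^2 ≤ 0 :=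
        Finset.sum_nonpos (fun k _ => h2 k)
      linarith
  have hNSpos : ∀ v ∈ LinearMap.range Mpos.mulVecLin, v ≠ 0 → v ⬝ᵥ ((-Θi) *ᵥ v) < 0 := by
    rintro v ⟨c, rfl⟩ hvne
    rw [Matrix.mulVecLin_apply, hquadpos c]
    have hcne : c ≠ 0 := fun h => hvne (by rw [h]; simp)
    have h2 : ∀ k, 0 ≤ (μ ((posE k : Fin m ⊕ Fin p)))⁻¹ * ((c ∘ Sum.inr) k)^2 := fun k => by
      have := hμpos k
      positivity
    rw [neg_lt_zero]
    by_cases hc1 : c ∘ Sum.inl = 0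
    · have hc2 : ∃ k, (c ∘ Sum.inr) k ≠ 0 := by
        by_contra hno
        push_neg at hno
        exact hcne (funext fun i => by
          cases i with
          | inl i => exact congrFun hc1 i
          | inr k => exact hno k)
      obtain ⟨k0, hk0⟩ := hc2
      have hk0' : 0 < (μ ((posE k0 : Fin m ⊕ Fin p)))⁻¹ * ((c ∘ Sum.inr) k0)^2 := by
        have := hμpos k0
        positivity
      have hsum : 0 < ∑ k, (μ ((posE k : Fin m ⊕ Fin p)))⁻¹ * ((c ∘ Sum.inr) k)^2 := by
        have h := Finset.sum_lt_sum (f := fun _ => (0:ℝ)) (fun k _ => h2 k)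
          ⟨k0, Finset.mem_univ _, hk0'⟩
        simpa using h
      have h1 : 0 ≤ (c ∘ Sum.inl) ⬝ᵥ (P⁻¹ *ᵥ (c ∘ Sum.inl)) := by
        have h := hPinv.posSemidef.dotProduct_mulVec_nonneg (c ∘ Sum.inl)
        simpa [star_trivial] using h
      linarith
    · have h1' : 0 < (c ∘ Sum.inl) ⬝ᵥ (P⁻¹ *ᵥ (c ∘ Sum.inl)) := by
        have h := hPinv.dotProduct_mulVec_pos hc1
        simpa [star_trivial] using h
      have hsum : 0 ≤ ∑ k, (μ ((posE k : Fin m ⊕ Fin p)))⁻¹ * ((c ∘ Sum.inr) k)^2 :=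
        Finset.sum_nonneg (fun k _ => h2 k)
      linarith
  -- ranks of the negative subspaces
  have hMneginj : Function.Injective Mneg.mulVecLin := by
    intro x y hxy
    have hsub : Mneg *ᵥ (x - y) = 0 := by
      simp only [Matrix.mulVecLin_apply] at hxy
      rw [Matrix.mulVec_sub, hxy, sub_self]
    rw [hMneg, Matrix.fromRows_mulVec, hM1neg, hM2neg] at hsub
    have hcl : (x - y) ∘ Sum.inl = 0 := by
      funext i
      exact congrFun hsub (Sum.inl (Sum.inr i))
    have hcr : (x - y) ∘ Sum.inr = 0 := by
      apply dd_Bm_inj bneg horthneg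
      simp only [Matrix.mulVecLin_apply, Matrix.mulVec_zero]
      rw [← hBneg]
      funext j
      exact congrFun hsub (Sum.inr j)
    have hce : x - y = 0 := funext fun i => by
      cases i with
      | inl i => exact congrFun hcl i
      | inr k => exact congrFun hcr k
    exact sub_eq_zero.mp hce
  have hMposinj : Function.Injective Mpos.mulVecLin := by
    intro x y hxy
    have hsub : Mpos *ᵥ (x - y) = 0 := by
      simp only [Matrix.mulVecLin_apply] at hxy
      rw [Matrix.mulVec_sub, hxy, sub_self]
    rw [hMpos, Matrix.fromRows_mulVec, hM1pos, hM2pos] at hsub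
    have hcl : (x - y) ∘ Sum.inl = 0 := by
      funext i
      exact congrFun hsub (Sum.inl (Sum.inl i))
    have hcr : (x - y) ∘ Sum.inr = 0 := by
      apply dd_Bm_inj bpos horthpos
      simp only [Matrix.mulVecLin_apply, Matrix.mulVec_zero]
      rw [← hBpos]
      funext j
      exact congrFun hsub (Sum.inr j)
    have hce : x - y = 0 := funext fun i => by
      cases i with
      | inl i => exact congrFun hcl i
      | inr k => exact congrFun hcr k
    exact sub_eq_zero.mp hce
  have hrankNSneg : finrank ℝ (LinearMap.range Mneg.mulVecLin) = n + p := by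
    rw [LinearMap.finrank_range_of_inj hMneginj, Module.finrank_fintype_fun_eq_card,
      Fintype.card_sum, Fintype.card_fin, Fintype.card_fin]
  have hrankNSpos : finrank ℝ (LinearMap.range Mpos.mulVecLin) = n + m := by
    rw [LinearMap.finrank_range_of_inj hMposinj, Module.finrank_fintype_fun_eq_card,
      Fintype.card_sum, Fintype.card_fin, Fintype.card_fin]
  -- hermitian parts
  have hermF : (U₁ᵀ * Θ₁ * U₁ + U₂ᵀ * S * U₂).IsHermitian :=
    (dd_herm Θ₁ hΘ₁sym U₁).add (dd_herm S hSt U₂)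
  have hJ1t : J₁ᵀ = -J₂ := by
    rw [hJ₁, hJ₂, Matrix.fromBlocks_transpose]
    simp [Matrix.fromBlocks_neg]
  have hJ2t : J₂ᵀ = -J₁ := by
    rw [hJ₂, hJ₁, Matrix.fromBlocks_transpose]
    simp [Matrix.fromBlocks_neg]
  have hShat : (J₁ * S⁻¹ * J₂)ᵀ = J₁ * S⁻¹ * J₂ := by
    rw [Matrix.transpose_mul, Matrix.transpose_mul, hSit, hJ1t, hJ2t]
    simp [Matrix.mul_neg, Matrix.neg_mul, neg_neg, Matrix.mul_assoc]
  have hermG : (V₁ᵀ * Θ₁i * V₁ + V₂ᵀ * (J₁ * S⁻¹ * J₂) * V₂).IsHermitian :=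
    (dd_herm Θ₁i hΘ₁isym V₁).add (dd_herm _ hShat V₂)
  -- final assembly
  constructor
  · intro hF
    refine PosSemidef.of_dotProduct_mulVec_nonneg hermG (fun x => ?_)
    have hle := dd_core Θ hΘsym hΘdet Uu Ww hUinj (LinearMap.range Mneg.mulVecLin) hNSneg
      (by rw [hrankNSneg]
          simp only [Fintype.card_sum, Fintype.card_fin]
          omega)
      horthWU
      (fun x' => by
        have h := hF.dotProduct_mulVec_nonneg x'
        rw [star_trivial, hFq x'] at h
        exact h) x
    rw [star_trivial, hGq x]
    linarith
  · intro hG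
    refine PosSemidef.of_dotProduct_mulVec_nonneg hermF (fun x => ?_)
    have hq' : ∀ c, 0 ≤ (Ww *ᵥ c) ⬝ᵥ ((-Θi) *ᵥ (Ww *ᵥ c)) := by
      intro c
      have h := hG.dotProduct_mulVec_nonneg c
      rw [star_trivial, hGq c] at h
      rw [Matrix.neg_mulVec, dotProduct_neg, ← hΘinv]
      exact h
    have hle := dd_core (-Θi) hnegΘisym hnegΘidet Ww Uu hWinj
      (LinearMap.range Mpos.mulVecLin) hNSpos
      (by rw [hrankNSpos]
          simp only [Fintype.card_sum, Fintype.card_fin]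
          omega)
      horthUW hq' x
    rw [hnegΘiinv, Matrix.neg_mulVec, dotProduct_neg] at hle
    rw [star_trivial, hFq x]
    linarith
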